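/- Let f : [0,∞) → ℝ be continuous and bounded, and let F(s) = ∫_0^∞ e^{−sx} f(x) dx denote its Laplace transform, defined for s > 0. Then for every x > 0, f(x) = lim_{m→∞} ((−1)^m/m!)·(m/x)^{m+1}·F^{(m)}(m/x), where F^{(m)} denotes the m-th derivative of F (Post's inversion formula for the Laplace transform). -/

import Mathlib

open MeasureTheory Set Real Filter Topology

lemma pi_aux_cont (n : ℕ) (b : ℝ) :
    ContinuousOn (fun t : ℝ => t ^ n * Real.exp (-(b * t))) (Ici 0) :=
  ((continuous_pow n).continuousOn).mul
    (((continuous_const.mul continuous_id).neg.rexp).continuousOn)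

lemma pi_aux_integrable (n : ℕ) {b : ℝ} (hb : 0 < b) :
    IntegrableOn (fun t : ℝ => t ^ n * Real.exp (-(b * t))) (Ioi 0) := by
  apply integrable_of_isBigO_exp_neg (half_pos hb) (pi_aux_cont n b)
  have h0 : Tendsto (fun t : ℝ => t ^ n * Real.exp (-(b / 2 * t))) atTop (𝓝 0) := by
    have h1 : Tendsto (fun t : ℝ => b / 2 * t) atTop atTop :=
      Tendsto.const_mul_atTop (half_pos hb) tendsto_id
    have h2 := (tendsto_pow_mul_exp_neg_atTop_nhds_zero n).comp h1
    have h3 := h2.const_mul ((2 / b) ^ n)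
    rw [mul_zero] at h3
    refine h3.congr fun t => ?_
    simp only [Function.comp]
    rw [← mul_assoc, ← mul_pow, show (2 / b) * (b / 2 * t) = t by field_simp]
  have h4 : (fun t : ℝ => t ^ n * Real.exp (-(b * t))) =O[atTop]
      fun t : ℝ => (t ^ n * Real.exp (-(b / 2 * t))) * Real.exp (-(b / 2) * t) := by
    refine Asymptotics.IsBigO.of_bound 1 ?_
    filter_upwards with t
    rw [one_mul]
    apply le_of_eq
    rw [Real.norm_eq_abs, Real.norm_eq_abs]
    congr 1
    rw [mul_assoc, ← Real.exp_add]
    ring_nf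
  exact h4.trans ((h0.isBigO_one ℝ).mul (Asymptotics.isBigO_refl _ _)|>.congr
    (fun _ => rfl) (fun t => one_mul _))

lemma pi_aux_integral (n : ℕ) {b : ℝ} (hb : 0 < b) :
    ∫ t : ℝ in Ioi 0, t ^ n * Real.exp (-(b * t)) = n.factorial / b ^ (n + 1) := by
  have h := Real.integral_rpow_mul_exp_neg_mul_Ioi (a := (n : ℝ) + 1) (by positivity) hb
  have h2 : ∀ t ∈ Ioi (0:ℝ), t ^ ((n : ℝ) + 1 - 1) * Real.exp (-(b * t))
      = t ^ n * Real.exp (-(b * t)) := by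
    intro t _
    rw [add_sub_cancel_right, Real.rpow_natCast]
  rw [setIntegral_congr_fun measurableSet_Ioi h2] at h
  rw [h, show ((n : ℝ) + 1) = ((n + 1 : ℕ) : ℝ) by push_cast; ring, Real.rpow_natCast]
  rw [show ((n + 1 : ℕ) : ℝ) = (n : ℝ) + 1 by push_cast; ring, Real.Gamma_nat_eq_factorial]
  field_simp
  rw [← mul_pow, one_div_mul_cancel hb.ne', one_pow]

lemma pi_int_f (f : ℝ → ℝ) (hf : ContinuousOn f (Ici 0)) {M : ℝ}
    (hbdd : ∀ x : ℝ, 0 ≤ x → |f x| ≤ M) (n : ℕ) {b : ℝ} (hb : 0 < b) :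
    IntegrableOn (fun t : ℝ => t ^ n * Real.exp (-(b * t)) * f t) (Ioi 0) := by
  refine Integrable.mono' ((pi_aux_integrable n hb).const_mul M) ?_ ?_
  · exact (((pi_aux_cont n b).mono (Ioi_subset_Ici le_rfl)).mul
      (hf.mono (Ioi_subset_Ici le_rfl))).aestronglyMeasurable measurableSet_Ioi
  · rw [ae_restrict_iff' measurableSet_Ioi]
    filter_upwards with t ht
    have ht0 : (0:ℝ) ≤ t := le_of_lt ht
    rw [Real.norm_eq_abs, abs_mul, abs_of_nonneg (by positivity :
      (0:ℝ) ≤ t ^ n * Real.exp (-(b * t)))]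
    calc t ^ n * Real.exp (-(b * t)) * |f t| ≤ t ^ n * Real.exp (-(b * t)) * M :=
          mul_le_mul_of_nonneg_left (hbdd t ht0) (by positivity)
      _ = M * (t ^ n * Real.exp (-(b * t))) := by ring

set_option maxHeartbeats 1000000 in
lemma pi_deriv (f : ℝ → ℝ) (hf : ContinuousOn f (Ici 0)) {M : ℝ}
    (hbdd : ∀ x : ℝ, 0 ≤ x → |f x| ≤ M) (n : ℕ) {s : ℝ} (hs : 0 < s) :
    HasDerivAt (fun u : ℝ => ∫ t in Ioi 0, t ^ n * Real.exp (-(u * t)) * f t)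
      (-∫ t in Ioi 0, t ^ (n + 1) * Real.exp (-(s * t)) * f t) s := by
  have hM : 0 ≤ M := le_trans (abs_nonneg _) (hbdd 0 le_rfl)
  have key := hasDerivAt_integral_of_dominated_loc_of_deriv_le
    (μ := volume.restrict (Ioi 0)) (x₀ := s)
    (F := fun u t => t ^ n * Real.exp (-(u * t)) * f t)
    (F' := fun u t => -(t ^ (n + 1) * Real.exp (-(u * t)) * f t))
    (bound := fun t => M * (t ^ (n + 1) * Real.exp (-(s / 2 * t))))
    (Metric.ball_mem_nhds s (half_pos hs)) ?_ ?_ ?_ ?_ ?_ ?_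
  · have h2 := key.2
    rwa [integral_neg] at h2
  · filter_upwards with u
    exact (((pi_aux_cont n u).mono (Ioi_subset_Ici le_rfl)).mul
      (hf.mono (Ioi_subset_Ici le_rfl))).aestronglyMeasurable measurableSet_Ioi
  · exact pi_int_f f hf hbdd n hs
  · exact ((((pi_aux_cont (n + 1) s).mono (Ioi_subset_Ici le_rfl)).mul
      (hf.mono (Ioi_subset_Ici le_rfl))).neg).aestronglyMeasurable measurableSet_Ioi
  · rw [ae_restrict_iff' measurableSet_Ioi]
    filter_upwards with t ht
    intro u hu
    have ht0 : (0:ℝ) ≤ t := le_of_lt ht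
    have hu2 : s / 2 ≤ u := by
      have := abs_lt.1 (mem_ball_iff_norm.1 hu)
      linarith [this.1]
    have hexp : Real.exp (-(u * t)) ≤ Real.exp (-(s / 2 * t)) := by
      apply Real.exp_le_exp.2
      have : s / 2 * t ≤ u * t := mul_le_mul_of_nonneg_right hu2 ht0
      linarith
    rw [norm_neg, Real.norm_eq_abs, abs_mul, abs_of_nonneg (by positivity :
      (0:ℝ) ≤ t ^ (n + 1) * Real.exp (-(u * t)))]
    calc t ^ (n + 1) * Real.exp (-(u * t)) * |f t|
        ≤ t ^ (n + 1) * Real.exp (-(s / 2 * t)) * M := by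
          apply mul_le_mul (mul_le_mul_of_nonneg_left hexp (by positivity))
            (hbdd t ht0) (abs_nonneg _) (by positivity)
      _ = M * (t ^ (n + 1) * Real.exp (-(s / 2 * t))) := by ring
  · exact (pi_aux_integrable (n + 1) (half_pos hs)).const_mul M
  · rw [ae_restrict_iff' measurableSet_Ioi]
    filter_upwards with t ht
    intro u _
    have h1 : HasDerivAt (fun u : ℝ => -(u * t)) (-t) u := by
      exact (hasDerivAt_mul_const t).neg
    have h2 : HasDerivAt (fun u : ℝ => t ^ n * Real.exp (-(u * t)) * f t)
        (t ^ n * (Real.exp (-(u * t)) * -t) * f t) u :=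
      (h1.exp.const_mul _).mul_const _
    have heq : t ^ n * (Real.exp (-(u * t)) * -t) * f t
        = -(t ^ (n + 1) * Real.exp (-(u * t)) * f t) := by ring
    exact heq ▸ h2

lemma pi_iter (f : ℝ → ℝ) (hf : ContinuousOn f (Ici 0)) {M : ℝ}
    (hbdd : ∀ x : ℝ, 0 ≤ x → |f x| ≤ M) (m : ℕ) :
    ∀ s : ℝ, 0 < s →
    iteratedDeriv m (fun s : ℝ => ∫ t : ℝ in Ioi 0, Real.exp (-s * t) * f t) s
      = (-1) ^ m * ∫ t : ℝ in Ioi 0, t ^ m * Real.exp (-(s * t)) * f t := by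
  induction m with
  | zero =>
    intro s _
    rw [iteratedDeriv_zero]
    simp only [pow_zero, one_mul, neg_mul]
  | succ m ih =>
    intro s hs
    rw [iteratedDeriv_succ]
    have hev : (iteratedDeriv m (fun s : ℝ => ∫ t : ℝ in Ioi 0, Real.exp (-s * t) * f t))
        =ᶠ[nhds s] fun u : ℝ => (-1) ^ m * ∫ t : ℝ in Ioi 0, t ^ m * Real.exp (-(u * t)) * f t := by
      filter_upwards [isOpen_Ioi.mem_nhds hs] with u hu using ih u hu
    rw [hev.deriv_eq]
    have hd := ((pi_deriv f hf hbdd m hs).const_mul ((-1:ℝ) ^ m)).deriv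
    rw [hd, pow_succ]
    ring

lemma pi_sq_int (m : ℕ) {b : ℝ} (hb : 0 < b) (x : ℝ) :
    IntegrableOn (fun t : ℝ => (t - x) ^ 2 * (t ^ m * Real.exp (-(b * t)))) (Ioi 0) := by
  have h : IntegrableOn (fun t : ℝ =>
      (t ^ (m + 2) * Real.exp (-(b * t)) - 2 * x * (t ^ (m + 1) * Real.exp (-(b * t))))
        + x ^ 2 * (t ^ m * Real.exp (-(b * t)))) (Ioi 0) :=
    ((pi_aux_integrable (m + 2) hb).sub
      ((pi_aux_integrable (m + 1) hb).const_mul (2 * x))).add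
      ((pi_aux_integrable m hb).const_mul (x ^ 2))
  exact IntegrableOn.congr_fun h (fun t _ => by ring) measurableSet_Ioi

lemma pi_sq (m : ℕ) {b : ℝ} (hb : 0 < b) (x : ℝ) :
    ∫ t : ℝ in Ioi 0, (t - x) ^ 2 * (t ^ m * Real.exp (-(b * t)))
      = (m + 2).factorial / b ^ (m + 3) - 2 * x * (m + 1).factorial / b ^ (m + 2)
        + x ^ 2 * m.factorial / b ^ (m + 1) := by
  have h1 : ∀ t ∈ Ioi (0:ℝ), (t - x) ^ 2 * (t ^ m * Real.exp (-(b * t)))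
      = (t ^ (m + 2) * Real.exp (-(b * t)) - 2 * x * (t ^ (m + 1) * Real.exp (-(b * t))))
        + x ^ 2 * (t ^ m * Real.exp (-(b * t))) := by
    intro t _; ring
  have hint1 : IntegrableOn (fun t : ℝ =>
      t ^ (m + 2) * Real.exp (-(b * t)) - 2 * x * (t ^ (m + 1) * Real.exp (-(b * t))))
      (Ioi 0) :=
    (pi_aux_integrable (m + 2) hb).sub ((pi_aux_integrable (m + 1) hb).const_mul (2 * x))
  have hint2 : IntegrableOn (fun t : ℝ => x ^ 2 * (t ^ m * Real.exp (-(b * t)))) (Ioi 0) :=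
    (pi_aux_integrable m hb).const_mul (x ^ 2)
  rw [setIntegral_congr_fun measurableSet_Ioi h1, integral_add hint1 hint2,
    integral_sub (pi_aux_integrable (m + 2) hb)
      ((pi_aux_integrable (m + 1) hb).const_mul (2 * x)),
    integral_const_mul, integral_const_mul, pi_aux_integral _ hb, pi_aux_integral _ hb,
    pi_aux_integral _ hb]
  ring_nf

lemma pi_var (m : ℕ) (hm : 0 < m) {x : ℝ} (hx : 0 < x) :
    ∫ t : ℝ in Ioi 0, (t - x) ^ 2
        * (((m / x) ^ (m + 1) / m.factorial) * (t ^ m * Real.exp (-((m / x) * t))))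
      = x ^ 2 * (m + 2) / m ^ 2 := by
  have hb : 0 < (m : ℝ) / x := div_pos (by exact_mod_cast hm) hx
  have h1 : ∀ t ∈ Ioi (0:ℝ), (t - x) ^ 2
        * (((m / x) ^ (m + 1) / m.factorial) * (t ^ m * Real.exp (-((m / x) * t))))
      = ((m / x) ^ (m + 1) / m.factorial)
        * ((t - x) ^ 2 * (t ^ m * Real.exp (-(((m : ℝ) / x) * t)))) := by
    intro t _; ring
  rw [setIntegral_congr_fun measurableSet_Ioi h1, integral_const_mul, pi_sq m hb x]
  have e2 : (((m + 2).factorial : ℕ) : ℝ) = ((m : ℝ) + 2) * (((m : ℝ) + 1) * m.factorial) := by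
    rw [show m + 2 = (m + 1) + 1 from rfl, Nat.factorial_succ, Nat.factorial_succ]
    push_cast; ring
  have e1 : (((m + 1).factorial : ℕ) : ℝ) = ((m : ℝ) + 1) * m.factorial := by
    rw [Nat.factorial_succ]; push_cast; ring
  have hm' : ((m : ℝ)) ≠ 0 := by exact_mod_cast hm.ne'
  have hfac : (m.factorial : ℝ) ≠ 0 := by exact_mod_cast m.factorial_ne_zero
  have hx' : x ≠ 0 := hx.ne'
  have hk : ((m : ℝ) / x) ^ (m + 1) ≠ 0 := by positivity
  rw [e2, e1, show m + 3 = (m + 1) + 2 from rfl, show m + 2 = (m + 1) + 1 from rfl,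
    pow_add, pow_add, pow_one]
  simp only [div_pow, pow_succ]
  field_simp
  ring

set_option maxHeartbeats 1000000 in
lemma pi_key (f : ℝ → ℝ) (hf : ContinuousOn f (Ici 0)) {M : ℝ}
    (hbdd : ∀ y : ℝ, 0 ≤ y → |f y| ≤ M) (m : ℕ) (hm : 0 < m) {x : ℝ} (hx : 0 < x)
    {δ ε : ℝ} (hδ : 0 < δ) (hε : 0 ≤ ε)
    (hδf : ∀ t : ℝ, 0 ≤ t → |t - x| < δ → |f t - f x| ≤ ε) :
    |(((m : ℝ) / x) ^ (m + 1) / m.factorial)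
        * (∫ t : ℝ in Ioi 0, t ^ m * Real.exp (-(((m : ℝ) / x) * t)) * f t) - f x|
      ≤ ε + (2 * M / δ ^ 2) * (x ^ 2 * ((m : ℝ) + 2) / (m : ℝ) ^ 2) := by
  have hM : 0 ≤ M := le_trans (abs_nonneg _) (hbdd 0 le_rfl)
  have hb : 0 < (m : ℝ) / x := div_pos (by exact_mod_cast hm) hx
  set b : ℝ := (m : ℝ) / x with hbdef
  set c : ℝ := b ^ (m + 1) / m.factorial with hcdef
  have hc : 0 ≤ c := by rw [hcdef]; positivity
  have hgint : IntegrableOn (fun t : ℝ => c * (t ^ m * Real.exp (-(b * t)))) (Ioi 0) :=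
    (pi_aux_integrable m hb).const_mul c
  have hgf : IntegrableOn (fun t : ℝ => c * (t ^ m * Real.exp (-(b * t))) * f t) (Ioi 0) :=
    IntegrableOn.congr_fun ((pi_int_f f hf hbdd m hb).const_mul c)
      (fun t _ => by ring) measurableSet_Ioi
  have hsqg : IntegrableOn
      (fun t : ℝ => (t - x) ^ 2 * (c * (t ^ m * Real.exp (-(b * t))))) (Ioi 0) :=
    IntegrableOn.congr_fun ((pi_sq_int m hb x).const_mul c)
      (fun t _ => by ring) measurableSet_Ioi
  have hunit : ∫ t : ℝ in Ioi 0, c * (t ^ m * Real.exp (-(b * t))) = 1 := by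
    rw [integral_const_mul, pi_aux_integral m hb, hcdef]
    have h1 : b ^ (m + 1) ≠ 0 := by positivity
    have h2 : (m.factorial : ℝ) ≠ 0 := by exact_mod_cast m.factorial_ne_zero
    field_simp
  have hvar : ∫ t : ℝ in Ioi 0, (t - x) ^ 2 * (c * (t ^ m * Real.exp (-(b * t))))
      = x ^ 2 * ((m : ℝ) + 2) / (m : ℝ) ^ 2 := pi_var m hm hx
  have heq : c * (∫ t : ℝ in Ioi 0, t ^ m * Real.exp (-(b * t)) * f t) - f x
      = ∫ t : ℝ in Ioi 0, (c * (t ^ m * Real.exp (-(b * t)))) * (f t - f x) := by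
    have e3 : ∫ t : ℝ in Ioi 0, (c * (t ^ m * Real.exp (-(b * t)))) * (f t - f x)
        = (∫ t : ℝ in Ioi 0, c * (t ^ m * Real.exp (-(b * t))) * f t)
          - (∫ t : ℝ in Ioi 0, c * (t ^ m * Real.exp (-(b * t)))) * f x := by
      rw [← integral_mul_const, ← integral_sub hgf (hgint.mul_const (f x))]
      exact setIntegral_congr_fun measurableSet_Ioi (fun t _ => by ring)
    rw [e3, hunit, one_mul, ← integral_const_mul]
    congr 1
    exact setIntegral_congr_fun measurableSet_Ioi (fun t _ => by ring)
  rw [heq, ← Real.norm_eq_abs]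
  have hbnd : ∀ᵐ t ∂(volume.restrict (Ioi 0)),
      ‖(c * (t ^ m * Real.exp (-(b * t)))) * (f t - f x)‖
        ≤ ε * (c * (t ^ m * Real.exp (-(b * t))))
          + (2 * M / δ ^ 2) * ((t - x) ^ 2 * (c * (t ^ m * Real.exp (-(b * t))))) := by
    rw [ae_restrict_iff' measurableSet_Ioi]
    filter_upwards with t ht
    have ht0 : (0:ℝ) ≤ t := le_of_lt ht
    have hA : (0:ℝ) ≤ c * (t ^ m * Real.exp (-(b * t))) := by positivity
    rw [norm_mul, Real.norm_eq_abs, Real.norm_eq_abs, abs_of_nonneg hA]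
    by_cases hcase : |t - x| < δ
    · have h1 : |f t - f x| ≤ ε := hδf t ht0 hcase
      have h2 : c * (t ^ m * Real.exp (-(b * t))) * |f t - f x|
          ≤ ε * (c * (t ^ m * Real.exp (-(b * t)))) := by
        rw [mul_comm ε]
        exact mul_le_mul_of_nonneg_left h1 hA
      have h3 : (0:ℝ) ≤ (2 * M / δ ^ 2) * ((t - x) ^ 2 * (c * (t ^ m * Real.exp (-(b * t)))))
        := by positivity
      linarith
    · have h2 : δ ≤ |t - x| := not_lt.1 hcase
      have h3 : |f t - f x| ≤ 2 * M := by
        have hb1 := hbdd t ht0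
        have hb2 := hbdd x hx.le
        calc |f t - f x| ≤ |f t| + |f x| := abs_sub _ _
          _ ≤ 2 * M := by linarith
      have h4 : δ ^ 2 ≤ (t - x) ^ 2 := by
        rw [← sq_abs (t - x)]
        exact pow_le_pow_left₀ hδ.le h2 2
      have h5 : c * (t ^ m * Real.exp (-(b * t))) * |f t - f x|
          ≤ c * (t ^ m * Real.exp (-(b * t))) * (2 * M) :=
        mul_le_mul_of_nonneg_left h3 hA
      have h6 : c * (t ^ m * Real.exp (-(b * t))) * (2 * M)
          ≤ (2 * M / δ ^ 2) * ((t - x) ^ 2 * (c * (t ^ m * Real.exp (-(b * t))))) := by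
        have hK : (0:ℝ) ≤ 2 * M / δ ^ 2 := by positivity
        have hint1 := mul_le_mul_of_nonneg_left h4 (mul_nonneg hK hA)
        have hint2 : (c * (t ^ m * Real.exp (-(b * t)))) * ((2 * M / δ ^ 2) * δ ^ 2)
            = (c * (t ^ m * Real.exp (-(b * t)))) * (2 * M) := by
          rw [div_mul_cancel₀]
          positivity
        nlinarith [hint1, hint2]
      have h7 : (0:ℝ) ≤ ε * (c * (t ^ m * Real.exp (-(b * t)))) := by positivity
      linarith
  have hbint : Integrable (fun t : ℝ => ε * (c * (t ^ m * Real.exp (-(b * t))))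
      + (2 * M / δ ^ 2) * ((t - x) ^ 2 * (c * (t ^ m * Real.exp (-(b * t))))))
      (volume.restrict (Ioi 0)) :=
    (hgint.const_mul ε).add (hsqg.const_mul (2 * M / δ ^ 2))
  have step1 := norm_integral_le_of_norm_le hbint hbnd
  have step2 : ∫ t : ℝ in Ioi 0, (ε * (c * (t ^ m * Real.exp (-(b * t))))
      + (2 * M / δ ^ 2) * ((t - x) ^ 2 * (c * (t ^ m * Real.exp (-(b * t))))))
      = ε + (2 * M / δ ^ 2) * (x ^ 2 * ((m : ℝ) + 2) / (m : ℝ) ^ 2) := by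
    rw [integral_add (hgint.const_mul ε) (hsqg.const_mul (2 * M / δ ^ 2)),
      integral_const_mul, hunit, mul_one, integral_const_mul, hvar]
  rw [step2] at step1
  exact step1

/-- **Post's inversion formula for the Laplace transform**. -/
theorem post_inversion
    (f : ℝ → ℝ) (hf : ContinuousOn f (Ici 0)) (M : ℝ)
    (hbdd : ∀ x : ℝ, 0 ≤ x → |f x| ≤ M)
    (x : ℝ) (hx : 0 < x) :
    Filter.Tendsto
      (fun m : ℕ => ((-1) ^ m / m.factorial : ℝ) * ((m : ℝ) / x) ^ (m + 1) *
        iteratedDeriv m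
          (fun s : ℝ => ∫ t : ℝ in Ioi 0, Real.exp (-s * t) * f t) ((m : ℝ) / x))
      Filter.atTop (nhds (f x)) := by
  have hM : 0 ≤ M := le_trans (abs_nonneg _) (hbdd 0 le_rfl)
  rw [Metric.tendsto_atTop]
  intro ε hε
  have hcx : ContinuousWithinAt f (Ici 0) x := hf x hx.le
  obtain ⟨δ, hδ, hδf⟩ := Metric.continuousWithinAt_iff.1 hcx (ε / 4) (by linarith)
  have hδf' : ∀ t : ℝ, 0 ≤ t → |t - x| < δ → |f t - f x| ≤ ε / 4 := by
    intro t ht hlt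
    have h := hδf (mem_Ici.2 ht) (by rwa [Real.dist_eq])
    rw [Real.dist_eq] at h
    exact h.le
  have t1 : Filter.Tendsto (fun m : ℕ => ((m : ℝ) + 2) / (m : ℝ) ^ 2) atTop (𝓝 0) := by
    have hfun : (fun m : ℕ => ((m : ℝ) + 2) / (m : ℝ) ^ 2)
        = fun m : ℕ => 1 / (m : ℝ) + 2 * (1 / (m : ℝ)) ^ 2 := by
      funext m
      rcases Nat.eq_zero_or_pos m with h | h
      · subst h; norm_num
      · have hm0 : ((m : ℝ)) ≠ 0 := Nat.cast_ne_zero.2 h.ne'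
        field_simp
    rw [hfun]
    have h1 := tendsto_one_div_atTop_nhds_zero_nat (𝕜 := ℝ)
    have := h1.add (((h1.pow 2)).const_mul 2)
    simpa using this
  have htend : Filter.Tendsto
      (fun m : ℕ => (2 * M / δ ^ 2) * (x ^ 2 * ((m : ℝ) + 2) / (m : ℝ) ^ 2)) atTop (𝓝 0) := by
    have h2 := t1.const_mul ((2 * M / δ ^ 2) * x ^ 2)
    rw [mul_zero] at h2
    refine h2.congr fun m => ?_
    ring
  have hev : ∀ᶠ m : ℕ in atTop,
      (2 * M / δ ^ 2) * (x ^ 2 * ((m : ℝ) + 2) / (m : ℝ) ^ 2) < ε / 2 :=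
    htend.eventually_lt_const (by linarith)
  obtain ⟨N0, hN0⟩ := Filter.eventually_atTop.1 hev
  refine ⟨max N0 1, fun m hm => ?_⟩
  have hm1 : 0 < m := lt_of_lt_of_le one_pos (le_trans (le_max_right _ _) hm)
  have hb : 0 < (m : ℝ) / x := div_pos (by exact_mod_cast hm1) hx
  rw [Real.dist_eq]
  have hiter := pi_iter f hf hbdd m ((m : ℝ) / x) hb
  have ha : ((-1 : ℝ) ^ m / m.factorial) * ((m : ℝ) / x) ^ (m + 1) *
        iteratedDeriv m
          (fun s : ℝ => ∫ t : ℝ in Ioi 0, Real.exp (-s * t) * f t) ((m : ℝ) / x)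
      = (((m : ℝ) / x) ^ (m + 1) / m.factorial)
          * ∫ t : ℝ in Ioi 0, t ^ m * Real.exp (-(((m : ℝ) / x) * t)) * f t := by
    rw [hiter]
    have h4 : ((-1 : ℝ) ^ m) * ((-1 : ℝ) ^ m) = 1 := by
      rw [← pow_add]
      exact Even.neg_one_pow ⟨m, rfl⟩
    calc ((-1 : ℝ) ^ m / m.factorial) * ((m : ℝ) / x) ^ (m + 1) *
          ((-1) ^ m * ∫ t : ℝ in Ioi 0, t ^ m * Real.exp (-(((m : ℝ) / x) * t)) * f t)
        = (((-1 : ℝ) ^ m) * ((-1 : ℝ) ^ m)) * ((((m : ℝ) / x) ^ (m + 1) / m.factorial)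
            * ∫ t : ℝ in Ioi 0, t ^ m * Real.exp (-(((m : ℝ) / x) * t)) * f t) := by ring
      _ = (((m : ℝ) / x) ^ (m + 1) / m.factorial)
            * ∫ t : ℝ in Ioi 0, t ^ m * Real.exp (-(((m : ℝ) / x) * t)) * f t := by
          rw [h4, one_mul]
  rw [ha]
  have hkey := pi_key f hf hbdd m hm1 hx hδ (by linarith : (0:ℝ) ≤ ε / 4) hδf'
  have hsmall := hN0 m (le_trans (le_max_left _ _) hm)
  calc |(((m : ℝ) / x) ^ (m + 1) / m.factorial)
        * (∫ t : ℝ in Ioi 0, t ^ m * Real.exp (-(((m : ℝ) / x) * t)) * f t) - f x|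
      ≤ ε / 4 + (2 * M / δ ^ 2) * (x ^ 2 * ((m : ℝ) + 2) / (m : ℝ) ^ 2) := hkey
    _ < ε := by linarith
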